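/- Let N ≥ 1, let f_1, …, f_N : ℝ → ℝ be Lebesgue-integrable functions with f_j(θ) ≥ 0 for all θ, let s_1, …, s_N ∈ ℤ be integer shifts, and let u ≥ 0 be a real number such that ∑_{j=1}^N f_j(θ − s_j) ≤ u for almost every θ ∈ ℝ. Let g_j be the unit-interval average of f_j, i.e., g_j(θ) = ∫_{⌊θ⌋}^{⌊θ⌋+1} f_j(ν) dν. Then ∑_{j=1}^N g_j(θ − s_j) ≤ u for every θ ∈ ℝ. -/

import Mathlib

open MeasureTheory intervalIntegral

/-- Unit-interval averaging preserves capacity constraints with integer shifts: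
if `∑_j f_j(θ − s_j) ≤ u` holds almost everywhere, then the unit-interval averages `g_j`
satisfy `∑_j g_j(θ − s_j) ≤ u` everywhere. -/
theorem stmt_4 (N : ℕ) (hN : 1 ≤ N) (f : Fin N → ℝ → ℝ)
    (hint : ∀ j, Integrable (f j)) (hpos : ∀ j, ∀ θ : ℝ, 0 ≤ f j θ)
    (s : Fin N → ℤ) (u : ℝ) (hu : 0 ≤ u)
    (hcap : ∀ᵐ θ : ℝ ∂volume, ∑ j, f j (θ - (s j : ℝ)) ≤ u)
    (g : Fin N → ℝ → ℝ)
    (hg : ∀ j, ∀ θ : ℝ, g j θ = ∫ ν in (⌊θ⌋ : ℝ)..((⌊θ⌋ : ℝ) + 1), f j ν) :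
    ∀ θ : ℝ, ∑ j, g j (θ - (s j : ℝ)) ≤ u := by
  intro θ
  set a : ℝ := (⌊θ⌋ : ℝ) with ha
  have key : ∀ j, g j (θ - (s j : ℝ)) = ∫ t in a..(a + 1), f j (t - (s j : ℝ)) := by
    intro j
    rw [hg j, Int.floor_sub_intCast, intervalIntegral.integral_comp_sub_right (f j) (s j : ℝ)]
    push_cast
    ring_nf
    rw [ha]
    ring_nf
  have hII : ∀ j, IntervalIntegrable (fun t => f j (t - (s j : ℝ))) volume a (a + 1) := by
    intro j
    exact ((hint j).comp_sub_right ((s j : ℝ))).intervalIntegrable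
  calc ∑ j, g j (θ - (s j : ℝ))
      = ∑ j, ∫ t in a..(a + 1), f j (t - (s j : ℝ)) := by
        exact Finset.sum_congr rfl (fun j _ => key j)
    _ = ∫ t in a..(a + 1), ∑ j, f j (t - (s j : ℝ)) := by
        rw [intervalIntegral.integral_finset_sum]
        intro j _
        exact hII j
    _ ≤ ∫ _ in a..(a + 1), u := by
        exact intervalIntegral.integral_mono_ae
          (f := fun t => ∑ j, f j (t - (s j : ℝ))) (g := fun _ => u)
          (by linarith) ((integrable_finset_sum _ (fun j _ => (hint j).comp_sub_right ((s j : ℝ)))).intervalIntegrable)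
          intervalIntegrable_const hcap
    _ = u := by simp
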